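/- The category of 2-categories and pseudofunctors does not have all pushouts: the pushout of the two inclusions of the terminal 2-category 1 into the free arrow 2-category [1] (as the source object and as the target object, respectively) does not exist in the category of 2-categories and pseudofunctors. -/

import Mathlib

open CategoryTheory CategoryTheory.Bicategory

/-- A (small) 2-category: a type equipped with a bicategory structure
(all of whose data lives in `Type 0`). -/
structure TwoCatObj where
  carrier : Type
  str : Bicategory.{0, 0} carrier

attribute [instance] TwoCatObj.str

/-- The free arrow 2-category `[1] = {0 → 1}`, a locally discrete 2-category. -/
abbrev ArrowTwoCat : Type := LocallyDiscrete (Fin 2)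

/-- The terminal 2-category `1`. -/
abbrev OneTwoCat : Type := LocallyDiscrete (Discrete PUnit)

/-- The pseudofunctor `1 ⟶ [1]` picking out the target object `1 ∈ [1]`. -/
noncomputable def pickOne : Pseudofunctor OneTwoCat ArrowTwoCat :=
  ((Functor.const (Discrete PUnit)).obj (⟨(1 : Fin 2)⟩ : ArrowTwoCat)).toPseudofunctor'

/-- The pseudofunctor `1 ⟶ [1]` picking out the source object `0 ∈ [1]`. -/
noncomputable def pickZero : Pseudofunctor OneTwoCat ArrowTwoCat :=
  ((Functor.const (Discrete PUnit)).obj (⟨(0 : Fin 2)⟩ : ArrowTwoCat)).toPseudofunctor'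

/-- `(P, j₀, j₁)` is a pushout, in the category of 2-categories and
pseudofunctors, of the span formed by the two inclusions of the terminal
2-category `1` into the arrow 2-category `[1]` (as the target object in the
first copy and the source object in the second copy). -/
def IsPushoutCocone (P : TwoCatObj)
    (j₀ j₁ : Pseudofunctor ArrowTwoCat P.carrier) : Prop :=
  pickOne.comp j₀ = pickZero.comp j₁ ∧
  ∀ (Q : TwoCatObj) (k₀ k₁ : Pseudofunctor ArrowTwoCat Q.carrier),
    pickOne.comp k₀ = pickZero.comp k₁ →
    ∃! h : Pseudofunctor P.carrier Q.carrier, j₀.comp h = k₀ ∧ j₁.comp h = k₁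


inductive QO : Type | x | y | z
deriving DecidableEq

instance : CategoryStruct.{0} QO where
  Hom _ _ := Bool
  id _ := false
  comp _ _ := false

instance (a b : QO) : Category.{0} (a ⟶ b) where
  Hom _ _ := PUnit
  id _ := PUnit.unit
  comp _ _ := PUnit.unit
  id_comp _ := rfl
  comp_id _ := rfl
  assoc _ _ _ := rfl

instance : Bicategory.{0,0} QO where
  homCategory _ _ := inferInstance
  whiskerLeft _ _ _ _ := PUnit.unit
  whiskerRight _ _ := PUnit.unit
  associator _ _ _ := ⟨PUnit.unit, PUnit.unit, rfl, rfl⟩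
  leftUnitor _ := ⟨PUnit.unit, PUnit.unit, rfl, rfl⟩
  rightUnitor _ := ⟨PUnit.unit, PUnit.unit, rfl, rfl⟩
  whiskerLeft_id := by intros; rfl
  whiskerLeft_comp := by intros; rfl
  id_whiskerLeft := by intros; rfl
  comp_whiskerLeft := by intros; rfl
  id_whiskerRight := by intros; rfl
  comp_whiskerRight := by intros; rfl
  whiskerRight_id := by intros; rfl
  whiskerRight_comp := by intros; rfl
  whisker_assoc := by intros; rfl
  whisker_exchange := by intros; rfl
  pentagon := by intros; rfl
  triangle := by intros; rfl

instance (a b : QO) (f g : a ⟶ b) : Subsingleton (f ⟶ g) :=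
  inferInstanceAs (Subsingleton PUnit)

instance (a b : QO) (f g : a ⟶ b) : Subsingleton (f ≅ g) :=
  ⟨fun _ _ => Iso.ext (Subsingleton.elim _ _)⟩

/-- iso between any parallel 1-morphisms in QO -/
def iso2 {a b : QO} (f g : a ⟶ b) : f ≅ g := ⟨PUnit.unit, PUnit.unit, rfl, rfl⟩

/-- The swapping pseudofunctor on `QO`: identity on objects, negation on `Hom x z`. -/
def sw : Pseudofunctor QO QO where
  obj a := a
  map {i j} b := if i = QO.x ∧ j = QO.z then !b else b
  map₂ _ := PUnit.unit
  map₂_id _ := rfl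
  map₂_comp _ _ := rfl
  mapId _ := iso2 _ _
  mapComp _ _ := iso2 _ _
  map₂_whisker_left := by intros; exact Subsingleton.elim _ _
  map₂_whisker_right := by intros; exact Subsingleton.elim _ _
  map₂_associator _ := by intros; exact Subsingleton.elim _ _
  map₂_left_unitor := by intros; exact Subsingleton.elim _ _
  map₂_right_unitor := by intros; exact Subsingleton.elim _ _

theorem pse {B : Type} [Bicategory.{0,0} B] {F G : Pseudofunctor B QO}
    (hobj : ∀ b, F.obj b = G.obj b)
    (hmap : ∀ {a b : B} (f : a ⟶ b), F.map f = G.map f) : F = G := by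
  obtain ⟨⟨⟨⟨obj, map⟩, map₂⟩, _, _⟩, mid, mcomp, _, _, _, _, _⟩ := F
  obtain ⟨⟨⟨⟨obj', map'⟩, map₂'⟩, _, _⟩, mid', mcomp', _, _, _, _, _⟩ := G
  have h1 : obj = obj' := funext hobj
  subst h1
  have h2 : @map = @map' := by
    funext a b f
    exact hmap f
  subst h2
  have h3 : @map₂ = @map₂' := by
    funext a b f g η
    exact Subsingleton.elim _ _
  subst h3
  have h4 : @mid = @mid' := by
    funext a
    exact Subsingleton.elim _ _
  subst h4
  have h5 : @mcomp = @mcomp' := by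
    funext a b c f g
    exact Subsingleton.elim _ _
  subst h5
  rfl


/-- identity on 1-morphisms (coerced to `Bool`) -/
def topBool {i j : QO} (b : i ⟶ j) : Bool := b

def kk₀ : Pseudofunctor ArrowTwoCat QO where
  obj d := if d.as = 0 then QO.x else QO.y
  map _ := false
  map₂ _ := PUnit.unit
  map₂_id := by intros; rfl
  map₂_comp := by intros; rfl
  mapId _ := iso2 _ _
  mapComp _ _ := iso2 _ _
  map₂_whisker_left := by intros; exact Subsingleton.elim _ _
  map₂_whisker_right := by intros; exact Subsingleton.elim _ _
  map₂_associator := by intros; exact Subsingleton.elim _ _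
  map₂_left_unitor := by intros; exact Subsingleton.elim _ _
  map₂_right_unitor := by intros; exact Subsingleton.elim _ _

def kk₁ : Pseudofunctor ArrowTwoCat QO where
  obj d := if d.as = 0 then QO.y else QO.z
  map _ := false
  map₂ _ := PUnit.unit
  map₂_id := by intros; rfl
  map₂_comp := by intros; rfl
  mapId _ := iso2 _ _
  mapComp _ _ := iso2 _ _
  map₂_whisker_left := by intros; exact Subsingleton.elim _ _
  map₂_whisker_right := by intros; exact Subsingleton.elim _ _
  map₂_associator := by intros; exact Subsingleton.elim _ _
  map₂_left_unitor := by intros; exact Subsingleton.elim _ _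
  map₂_right_unitor := by intros; exact Subsingleton.elim _ _

lemma kk₀_obj_ne (d : ArrowTwoCat) : kk₀.obj d ≠ QO.z := by
  rcases d with ⟨d⟩
  fin_cases d <;> simp [kk₀]

lemma kk₁_obj_ne (d : ArrowTwoCat) : kk₁.obj d ≠ QO.x := by
  rcases d with ⟨d⟩
  fin_cases d <;> simp [kk₁]

lemma cocQ : pickOne.comp kk₀ = pickZero.comp kk₁ := by
  apply pse
  · rintro ⟨⟨⟨⟩⟩⟩
    rfl
  · intro a b f
    rfl

/-- The category of 2-categories and pseudofunctors does not have all pushouts: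
the pushout of the two inclusions of the terminal 2-category `1` into the free
arrow 2-category `[1]` (as target object and as source object respectively)
does not exist. -/
theorem no_pushout_of_arrows_in_2Cat_ps :
    ¬ ∃ (P : TwoCatObj) (j₀ j₁ : Pseudofunctor ArrowTwoCat P.carrier),
        IsPushoutCocone P j₀ j₁ := by
  rintro ⟨P, j₀, j₁, hcoc, huniv⟩
  obtain ⟨h, ⟨hh₀, hh₁⟩, huniq⟩ := huniv ⟨QO, inferInstance⟩ kk₀ kk₁ cocQ
  -- the two endpoints agree in P
  have hb : j₀.obj ⟨(1 : Fin 2)⟩ = j₁.obj ⟨(0 : Fin 2)⟩ :=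
    congrArg (fun F : Pseudofunctor OneTwoCat P.carrier => F.obj ⟨⟨PUnit.unit⟩⟩) hcoc
  set a : P.carrier := j₀.obj ⟨(0 : Fin 2)⟩ with ha_def
  set c : P.carrier := j₁.obj ⟨(1 : Fin 2)⟩ with hc_def
  have f : a ⟶ j₀.obj ⟨(1 : Fin 2)⟩ := j₀.map ⟨homOfLE (by decide)⟩
  have g : j₁.obj ⟨(0 : Fin 2)⟩ ⟶ c := j₁.map ⟨homOfLE (by decide)⟩
  have ecast : (j₁.obj ⟨(0 : Fin 2)⟩ ⟶ c) = (j₀.obj ⟨(1 : Fin 2)⟩ ⟶ c) := by rw [hb]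
  set m : a ⟶ c := f ≫ cast ecast g with hm_def
  have ha : h.obj a = QO.x := congrArg (fun F : Pseudofunctor ArrowTwoCat QO => F.obj ⟨(0 : Fin 2)⟩) hh₀
  have hc : h.obj c = QO.z := congrArg (fun F : Pseudofunctor ArrowTwoCat QO => F.obj ⟨(1 : Fin 2)⟩) hh₁
  -- the perturbed mediator
  have c₀ : j₀.comp (h.comp sw) = kk₀ := by
    apply pse
    · intro d
      show h.obj (j₀.obj d) = kk₀.obj d
      exact congrArg (fun F : Pseudofunctor ArrowTwoCat QO => F.obj d) hh₀
    · intro d d' φ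
      have hm : topBool ((j₀.comp h).map φ) = topBool (kk₀.map φ) :=
        congrArg (fun F : Pseudofunctor ArrowTwoCat QO => topBool (F.map φ)) hh₀
      have hj : h.obj (j₀.obj d') = kk₀.obj d' :=
        congrArg (fun F : Pseudofunctor ArrowTwoCat QO => F.obj d') hh₀
      show (if h.obj (j₀.obj d) = QO.x ∧ h.obj (j₀.obj d') = QO.z
            then !(topBool ((j₀.comp h).map φ)) else topBool ((j₀.comp h).map φ)) = false
      rw [if_neg, hm]
      · rfl
      · rintro ⟨-, hz⟩
        rw [hj] at hz
        exact kk₀_obj_ne d' hz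
  have c₁ : j₁.comp (h.comp sw) = kk₁ := by
    apply pse
    · intro d
      show h.obj (j₁.obj d) = kk₁.obj d
      exact congrArg (fun F : Pseudofunctor ArrowTwoCat QO => F.obj d) hh₁
    · intro d d' φ
      have hm : topBool ((j₁.comp h).map φ) = topBool (kk₁.map φ) :=
        congrArg (fun F : Pseudofunctor ArrowTwoCat QO => topBool (F.map φ)) hh₁
      have hj : h.obj (j₁.obj d) = kk₁.obj d :=
        congrArg (fun F : Pseudofunctor ArrowTwoCat QO => F.obj d) hh₁
      show (if h.obj (j₁.obj d) = QO.x ∧ h.obj (j₁.obj d') = QO.z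
            then !(topBool ((j₁.comp h).map φ)) else topBool ((j₁.comp h).map φ)) = false
      rw [if_neg, hm]
      · rfl
      · rintro ⟨hx, -⟩
        rw [hj] at hx
        exact kk₁_obj_ne d hx
  have eq : h.comp sw = h := huniq (h.comp sw) ⟨c₀, c₁⟩
  have hflip : topBool ((h.comp sw).map m) = topBool (h.map m) :=
    congrArg (fun F : Pseudofunctor P.carrier QO => topBool (F.map m)) eq
  have hflip' : (if h.obj a = QO.x ∧ h.obj c = QO.z
      then !(topBool (h.map m)) else topBool (h.map m)) = topBool (h.map m) := hflip
  rw [if_pos ⟨ha, hc⟩] at hflip'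
  exact (Bool.not_ne_self _) hflip'
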